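/- Let A, B be real m×m matrices and v ∈ ℝ such that det(A + v·B) = 0. Suppose there exist vectors x ∈ Ker((A + v·B)ᵀ) and y ∈ Ker(A + v·B) with xᵀ·B·y ≠ 0. Then rank(A + v·B) < max over w ∈ ℝ of rank(A + w·B). -/

import Mathlib

set_option maxRecDepth 8000


open Matrix Polynomial

/-- Gram determinant criterion for linear independence of the columns of a real matrix. -/
lemma gram_det_ne_zero_iff {m n : ℕ} (C : Matrix (Fin m) (Fin n) ℝ) :
    (Cᵀ * C).det ≠ 0 ↔ LinearIndependent ℝ (fun i => (fun j => C j i)) := by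
  have key : ∀ g : Fin n → ℝ, C.mulVec g = 0 ↔ ∑ i, g i • (fun j => C j i) = 0 := by
    intro g
    constructor <;> intro h <;> funext j <;> have := congrFun h j <;>
      simpa [Matrix.mulVec, dotProduct, Finset.sum_apply, mul_comm] using this
  constructor
  · intro hdet
    rw [Fintype.linearIndependent_iff]
    intro g hg
    have hCg : C.mulVec g = 0 := (key g).mpr hg
    have hg0 : g = 0 := by
      by_contra hne
      apply hdet
      rw [← Matrix.exists_mulVec_eq_zero_iff]
      exact ⟨g, hne, by rw [← Matrix.mulVec_mulVec, hCg, Matrix.mulVec_zero]⟩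
    intro i; rw [hg0]; rfl
  · intro hind hdet
    obtain ⟨c, hc, hmc⟩ := (Matrix.exists_mulVec_eq_zero_iff).mpr hdet
    have h1 : C.mulVec c ⬝ᵥ C.mulVec c = 0 := by
      have h0 : c ⬝ᵥ (Cᵀ * C).mulVec c = 0 := by rw [hmc, dotProduct_zero]
      rwa [← Matrix.mulVec_mulVec, Matrix.dotProduct_mulVec, Matrix.vecMul_transpose] at h0
    have h2 : C.mulVec c = 0 := dotProduct_self_eq_zero.mp h1
    have := Fintype.linearIndependent_iff.mp hind c ((key c).mp h2)
    exact hc (funext this)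

theorem rank_drop (m : ℕ) (A B : Matrix (Fin m) (Fin m) ℝ) (v : ℝ)
    (hdet : (A + v • B).det = 0)
    (x y : Fin m → ℝ)
    (hx : (A + v • B)ᵀ.mulVec x = 0)
    (hy : (A + v • B).mulVec y = 0)
    (hxy : x ⬝ᵥ B.mulVec y ≠ 0) :
    ∃ w : ℝ, (A + v • B).rank < (A + w • B).rank := by
  classical
  set M := A + v • B with hM
  -- x annihilates the range of M
  have hxrange : ∀ z : Fin m → ℝ, x ⬝ᵥ M.mulVec z = 0 := by
    intro z
    rw [Matrix.dotProduct_mulVec, ← Matrix.mulVec_transpose, hx, zero_dotProduct]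
  set n := Module.finrank ℝ ↥(LinearMap.range M.mulVecLin) with hn
  have hrank : M.rank = n := rfl
  let b : Module.Basis (Fin n) ℝ ↥(LinearMap.range M.mulVecLin) :=
    Module.finBasis ℝ ↥(LinearMap.range M.mulVecLin)
  have hw : ∀ i : Fin n, ∃ u, M.mulVec u = (b i : Fin m → ℝ) := by
    intro i
    obtain ⟨u, hu⟩ := (b i).2
    exact ⟨u, by simpa [Matrix.mulVecLin_apply] using hu⟩
  choose w hwspec using hw
  -- B y is not in the range of M
  have hBy : B.mulVec y ∉ LinearMap.range M.mulVecLin := by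
    rintro ⟨z, hz⟩
    apply hxy
    rw [← show M.mulVecLin z = B.mulVec y from hz, Matrix.mulVecLin_apply]
    exact hxrange z
  -- the perturbed family
  set Ft : ℝ → Fin (n + 1) → (Fin m → ℝ) := fun t =>
    Fin.snoc (fun i => M.mulVec (w i) + t • B.mulVec (w i)) (B.mulVec y) with hFt
  -- independence at t = 0
  have hF0 : LinearIndependent ℝ (Ft 0) := by
    have h0 : Ft 0 = Fin.snoc (fun i => M.mulVec (w i)) (B.mulVec y) := by
      rw [hFt]
      congr 1
      funext i
      simp
    rw [h0, linearIndependent_fin_snoc]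
    constructor
    · have : (fun i => M.mulVec (w i)) = (fun i => ((b i : Fin m → ℝ))) := funext hwspec
      rw [this]
      exact b.linearIndependent.map' (Submodule.subtype _) (Submodule.ker_subtype _)
    · intro hin
      apply hBy
      have hle : Submodule.span ℝ (Set.range fun i => M.mulVec (w i)) ≤
          LinearMap.range M.mulVecLin := by
        rw [Submodule.span_le]
        rintro _ ⟨i, rfl⟩
        exact ⟨w i, by simp [Matrix.mulVecLin_apply]⟩
      exact hle hin
  -- polynomial Gram determinant
  set Cp : Matrix (Fin m) (Fin (n + 1)) ℝ[X] := Matrix.of fun j =>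
    Fin.snoc (fun i => Polynomial.C (M.mulVec (w i) j) + Polynomial.X * Polynomial.C (B.mulVec (w i) j))
      (Polynomial.C (B.mulVec y j)) with hCp
  set g : ℝ[X] := (Cpᵀ * Cp).det with hg
  have heval : ∀ t : ℝ, Cp.map (eval t) = Matrix.of (fun j i => Ft t i j) := by
    intro t
    ext j i
    show eval t (Cp j i) = Ft t i j
    rw [hCp, hFt]
    refine Fin.lastCases ?_ (fun k => ?_) i
    · simp only [Matrix.of_apply, Fin.snoc_last, eval_C]
    · simp only [Matrix.of_apply, Fin.snoc_castSucc, eval_add, eval_mul, eval_C, eval_X,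
        Pi.add_apply, Pi.smul_apply, smul_eq_mul]
      try ring
  have hgeval : ∀ t : ℝ, g.eval t =
      ((Matrix.of (fun j i => Ft t i j))ᵀ * Matrix.of (fun j i => Ft t i j)).det := by
    intro t
    have h1 : (evalRingHom t) ((Cpᵀ * Cp).det) = ((Cpᵀ * Cp).map (evalRingHom t)).det :=
      RingHom.map_det _ _
    have h2 : (Cpᵀ * Cp).map (evalRingHom t) =
        (Cp.map (evalRingHom t))ᵀ * Cp.map (evalRingHom t) := by
      rw [Matrix.map_mul, Matrix.transpose_map]
    have h3 : Cp.map (evalRingHom t) = Matrix.of (fun j i => Ft t i j) := heval t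
    rw [hg]
    calc (Cpᵀ * Cp).det.eval t = (evalRingHom t) ((Cpᵀ * Cp).det) := rfl
      _ = _ := by rw [h1, h2, h3]
  -- Gram determinant criterion in terms of Ft
  have hgram : ∀ t : ℝ, g.eval t ≠ 0 ↔ LinearIndependent ℝ (Ft t) := by
    intro t
    rw [hgeval t]
    have := gram_det_ne_zero_iff (Matrix.of (fun j i => Ft t i j))
    simpa using this
  have hg0 : g.eval 0 ≠ 0 := (hgram 0).mpr hF0
  have hgne : Polynomial.X * g ≠ 0 := by
    intro h
    rcases mul_eq_zero.mp h with h | h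
    · exact Polynomial.X_ne_zero h
    · exact hg0 (by rw [h]; simp)
  -- pick t ≠ 0 with g.eval t ≠ 0
  obtain ⟨t, ht⟩ := ((Polynomial.finite_setOf_isRoot hgne).infinite_compl).nonempty
  have hts : t * g.eval t ≠ 0 := by
    simpa [Set.mem_compl_iff, Polynomial.IsRoot] using ht
  have ht0 : t ≠ 0 := fun h => hts (by rw [h, zero_mul])
  have hgt : g.eval t ≠ 0 := fun h => hts (by rw [h, mul_zero])
  have hFtind : LinearIndependent ℝ (Ft t) := (hgram t).mp hgt
  -- key matrix identity
  have hkey : ∀ u : Fin m → ℝ, (A + (v + t) • B).mulVec u = M.mulVec u + t • B.mulVec u := by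
    intro u
    have : A + (v + t) • B = M + t • B := by
      rw [hM, add_smul]; abel
    rw [this, Matrix.add_mulVec, Matrix.smul_mulVec]
  -- the family lies in the range of A + (v+t) • B
  have hsub : ∀ i, Ft t i ∈ LinearMap.range (A + (v + t) • B).mulVecLin := by
    intro i
    refine Fin.lastCases ?_ (fun k => ?_) i
    · refine ⟨t⁻¹ • y, ?_⟩
      rw [Matrix.mulVecLin_apply, hkey, Matrix.mulVec_smul, hy, smul_zero, zero_add,
        Matrix.mulVec_smul, smul_smul, mul_inv_cancel₀ ht0, one_smul]
      simp [hFt]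
    · exact ⟨w k, by rw [Matrix.mulVecLin_apply, hkey]; simp [hFt]⟩
  have hle : Submodule.span ℝ (Set.range (Ft t)) ≤
      LinearMap.range (A + (v + t) • B).mulVecLin := by
    rw [Submodule.span_le]
    rintro _ ⟨i, rfl⟩
    exact hsub i
  have hfr : Module.finrank ℝ (Submodule.span ℝ (Set.range (Ft t))) = n + 1 := by
    rw [finrank_span_eq_card hFtind, Fintype.card_fin]
  have hmono : n + 1 ≤ (A + (v + t) • B).rank := by
    rw [show (A + (v + t) • B).rank =
        Module.finrank ℝ (LinearMap.range (A + (v + t) • B).mulVecLin) from rfl, ← hfr]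
    exact Submodule.finrank_mono hle
  exact ⟨v + t, by omega⟩
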